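/- In a δ-large market with no utility caps, suppose the algorithm returns an allocation x, prices p, and scaling factors such that after scaling each agent's utilities so that all α_i = 1, we have (i) x maximizes Σ_i u_i(x_i) over all allocations, and (ii) for every agent k there exists an item g_k ∈ x_k with u_k(x_k − g_k) ≤ (1+4ε)·u_i(x_i) for every agent i. Then NSW(x*)/NSW(x) ≤ (1+4ε)/(1−δ) for any allocation x*. -/

import Mathlib

open Finset

/-- Large-market guarantee.  There are `n` agents and a finite set of items with
additive uncapped utilities `u`.  The market is `δ`-large: every single-item utility
is at most `δ·u_i(G)/n`.  If the returned allocation `x` (after scaling so that all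
MBB values equal one) (i) maximizes utilitarian social welfare over all allocations
and (ii) is such that each agent `k` owns an item `g_k` with
`u_k(x_k − g_k) ≤ (1+4ε)·u_i(x_i)` for every agent `i`, then
`NSW(x*)/NSW(x) ≤ (1+4ε)/(1−δ)` for every allocation `x*`. -/
theorem large_market_bound {n : ℕ} (hn : 0 < n) {I : Type*} [Fintype I]
    (u : Fin n → I → ℝ) (hu : ∀ i j, 0 ≤ u i j)
    (δ ε : ℝ) (hδ0 : 0 < δ) (hδ1 : δ < 1) (hε : 0 < ε)
    (hlarge : ∀ i j, u i j ≤ δ * (∑ j', u i j') / n)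
    (x : I → Fin n)
    (hmax : ∀ y : I → Fin n,
      ∑ i, ∑ j ∈ univ.filter (fun j => y j = i), u i j ≤
        ∑ i, ∑ j ∈ univ.filter (fun j => x j = i), u i j)
    (hEF : ∀ k : Fin n, ∃ g, x g = k ∧ ∀ i : Fin n,
      (∑ j ∈ univ.filter (fun j => x j = k), u k j) - u k g ≤
        (1 + 4 * ε) * ∑ j ∈ univ.filter (fun j => x j = i), u i j) :
    ∀ y : I → Fin n,
      (∏ i, ∑ j ∈ univ.filter (fun j => y j = i), u i j) ^ (1 / (n : ℝ)) ≤
        (1 + 4 * ε) / (1 - δ) *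
          (∏ i, ∑ j ∈ univ.filter (fun j => x j = i), u i j) ^ (1 / (n : ℝ)) := by
  intro y
  set b : Fin n → ℝ := fun i => ∑ j ∈ univ.filter (fun j => x j = i), u i j with hb
  set a : Fin n → ℝ := fun i => ∑ j ∈ univ.filter (fun j => y j = i), u i j with ha
  set U : ℝ := ∑ i, b i with hU
  have hnR : (0 : ℝ) < n := by exact_mod_cast hn
  have hnne : (n : ℝ) ≠ 0 := ne_of_gt hnR
  have hεn : (0 : ℝ) < 1 + 4 * ε := by linarith
  have hδn : (0 : ℝ) < 1 - δ := by linarith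
  have hbnn : ∀ i, 0 ≤ b i := fun i => Finset.sum_nonneg fun j _ => hu i j
  have hann : ∀ i, 0 ≤ a i := fun i => Finset.sum_nonneg fun j _ => hu i j
  have haU : ∑ i, a i ≤ U := hmax y
  -- total utility of any single agent is at most U
  have htot : ∀ k : Fin n, ∑ j, u k j ≤ U := by
    intro k
    have h := hmax (fun _ => k)
    have heq : ∑ i, ∑ j ∈ univ.filter (fun _ : I => (k : Fin n) = i), u i j
        = ∑ j, u k j := by
      rw [Finset.sum_eq_single k]
      · simp
      · intro i _ hik
        rw [Finset.filter_const, if_neg (fun h' => hik h'.symm)]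
        simp
      · simp
    calc ∑ j, u k j = ∑ i, ∑ j ∈ univ.filter (fun _ : I => (k : Fin n) = i), u i j :=
          heq.symm
      _ ≤ U := h
  -- key lower bound on each b i
  have hkey : ∀ i : Fin n, (1 - δ) * U ≤ (1 + 4 * ε) * n * b i := by
    intro i
    have hstep : ∀ k : Fin n, b k ≤ (1 + 4 * ε) * b i + δ * U / n := by
      intro k
      obtain ⟨g, _, hg⟩ := hEF k
      have h1 : b k - u k g ≤ (1 + 4 * ε) * b i := hg i
      have h2 : u k g ≤ δ * U / n := by
        refine le_trans (hlarge k g) ?_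
        gcongr
        exact htot k
      linarith
    have hsum : U ≤ (1 + 4 * ε) * n * b i + δ * U := by
      calc U = ∑ k, b k := rfl
        _ ≤ ∑ _k : Fin n, ((1 + 4 * ε) * b i + δ * U / n) :=
            Finset.sum_le_sum fun k _ => hstep k
        _ = n * ((1 + 4 * ε) * b i + δ * U / n) := by
            rw [Finset.sum_const, card_univ, Fintype.card_fin, nsmul_eq_mul]
        _ = (1 + 4 * ε) * n * b i + δ * U := by
            field_simp
    linarith
  by_cases hU0 : U = 0
  · -- degenerate case: all utilities are zero
    have hb0 : ∀ i, b i = 0 := by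
      intro i
      have := (Finset.sum_eq_zero_iff_of_nonneg (fun i _ => hbnn i)).mp hU0
      exact this i (Finset.mem_univ i)
    have ha0 : ∀ i, a i = 0 := by
      have hsum0 : ∑ i, a i = 0 :=
        le_antisymm (haU.trans_eq hU0)
          (Finset.sum_nonneg fun i _ => hann i)
      intro i
      exact (Finset.sum_eq_zero_iff_of_nonneg (fun i _ => hann i)).mp hsum0 i
        (Finset.mem_univ i)
    have i0 : Fin n := ⟨0, hn⟩
    have hpa : (∏ i, a i) = 0 := Finset.prod_eq_zero (Finset.mem_univ i0) (ha0 i0)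
    have hpb : (∏ i, b i) = 0 := Finset.prod_eq_zero (Finset.mem_univ i0) (hb0 i0)
    rw [hpa, hpb, Real.zero_rpow (by positivity : (1 : ℝ) / n ≠ 0), mul_zero]
  · have hUpos : 0 < U :=
      lt_of_le_of_ne (Finset.sum_nonneg fun i _ => hbnn i) (Ne.symm hU0)
    set c : ℝ := (1 - δ) * U / ((1 + 4 * ε) * n) with hc
    have hcpos : 0 < c := by positivity
    have hcb : ∀ i, c ≤ b i := by
      intro i
      rw [hc, div_le_iff₀ (by positivity)]
      calc (1 - δ) * U ≤ (1 + 4 * ε) * n * b i := hkey i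
        _ = b i * ((1 + 4 * ε) * n) := by ring
    -- AM-GM bound for y
    have hAM : (∏ i, a i) ^ (1 / (n : ℝ)) ≤ U / n := by
      have hgm := Real.geom_mean_le_arith_mean_weighted univ (fun _ => 1 / (n : ℝ)) a
        (fun i _ => by positivity)
        (by rw [Finset.sum_const, card_univ, Fintype.card_fin, nsmul_eq_mul]; field_simp)
        (fun i _ => hann i)
      rw [Real.finset_prod_rpow univ a (fun i _ => hann i) (1 / n)] at hgm
      calc (∏ i, a i) ^ (1 / (n : ℝ)) ≤ ∑ i, (1 / (n : ℝ)) * a i := hgm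
        _ = (∑ i, a i) / n := by rw [← Finset.mul_sum]; ring
        _ ≤ U / n := by gcongr
    -- lower bound on NSW of x
    have hNSWx : c ≤ (∏ i, b i) ^ (1 / (n : ℝ)) := by
      have hcn : c ^ n ≤ ∏ i, b i := by
        calc c ^ n = ∏ _i : Fin n, c := by
              rw [Finset.prod_const, card_univ, Fintype.card_fin]
          _ ≤ ∏ i, b i := Finset.prod_le_prod (fun i _ => hcpos.le) (fun i _ => hcb i)
      have := Real.rpow_le_rpow (by positivity) hcn (by positivity : (0:ℝ) ≤ 1 / n)
      calc c = (c ^ n) ^ (1 / (n : ℝ)) := by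
            rw [← Real.rpow_natCast c n, ← Real.rpow_mul hcpos.le,
              mul_one_div_cancel hnne, Real.rpow_one]
        _ ≤ (∏ i, b i) ^ (1 / (n : ℝ)) := this
    have hmid : (1 + 4 * ε) / (1 - δ) * c = U / n := by
      rw [hc]; field_simp
    calc (∏ i, a i) ^ (1 / (n : ℝ)) ≤ U / n := hAM
      _ = (1 + 4 * ε) / (1 - δ) * c := hmid.symm
      _ ≤ (1 + 4 * ε) / (1 - δ) * (∏ i, b i) ^ (1 / (n : ℝ)) := by
          apply mul_le_mul_of_nonneg_left hNSWx (by positivity)
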